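/- Let s : V → ℤ be a sandpile on a locally finite connected graph G. If a sequence x = (x_1,...,x_m) of vertices is legal for s and a sequence y = (y_1,...,y_n) is stabilizing for s, then x is a permutation of a subsequence of y. In particular, m ≤ n. -/

import Mathlib

/-- Toppling vertex `x`: `x` loses `deg x` particles and each neighbor gains one. -/
def SimpleGraph.topple {V : Type*} [DecidableEq V] (G : SimpleGraph V) [G.LocallyFinite]
    (s : V → ℤ) (x : V) : V → ℤ :=
  fun v => s v + (if v ∈ G.neighborFinset x then 1 else 0) - (if v = x then (G.degree x : ℤ) else 0)

/-- A sequence of vertices is legal for `s` if each vertex is unstable at the time it is toppled. -/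
def SimpleGraph.Legal {V : Type*} [DecidableEq V] (G : SimpleGraph V) [G.LocallyFinite]
    (s : V → ℤ) (l : List V) : Prop :=
  ∀ i : Fin l.length, (G.degree (l.get i) : ℤ) ≤ (l.take i).foldl (G.topple) s (l.get i)

/-- A sequence of vertices is stabilizing for `s` if the resulting configuration is stable. -/
def SimpleGraph.Stabilizing {V : Type*} [DecidableEq V] (G : SimpleGraph V) [G.LocallyFinite]
    (s : V → ℤ) (l : List V) : Prop :=
  ∀ v, l.foldl (G.topple) s v ≤ (G.degree v : ℤ) - 1


lemma foldl_topple_eq {V : Type*} [DecidableEq V] (G : SimpleGraph V) [G.LocallyFinite]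
    (l : List V) (s : V → ℤ) (v : V) :
    l.foldl (G.topple) s v =
      s v + (l.countP (fun u => v ∈ G.neighborFinset u) : ℤ)
        - (l.count v : ℤ) * (G.degree v : ℤ) := by
  induction l generalizing s with
  | nil => simp
  | cons a t ih =>
    rw [List.foldl_cons, ih, List.countP_cons, List.count_cons]
    simp only [SimpleGraph.topple]
    rcases eq_or_ne a v with h2 | h2
    · subst h2
      by_cases h1 : a ∈ G.neighborFinset a <;> simp [h1] <;> ring
    · by_cases h1 : v ∈ G.neighborFinset a <;> simp [h1, h2, h2.symm] <;> ring

lemma foldl_topple_perm {V : Type*} [DecidableEq V] (G : SimpleGraph V) [G.LocallyFinite]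
    {l l' : List V} (h : l.Perm l') (s : V → ℤ) (v : V) :
    l.foldl (G.topple) s v = l'.foldl (G.topple) s v := by
  rw [foldl_topple_eq, foldl_topple_eq, h.countP_eq, h.count_eq]

/-- If `x` is legal for the sandpile `s` and `y` is stabilizing for `s`, then `x` is a
permutation of a subsequence of `y`; in particular `x.length ≤ y.length`. -/
theorem legal_subperm_stabilizing {V : Type*} [DecidableEq V] (G : SimpleGraph V)
    [G.LocallyFinite] (hconn : G.Connected) (s : V → ℤ) (x y : List V)
    (hx : G.Legal s x) (hy : G.Stabilizing s y) :
    x.Subperm y ∧ x.length ≤ y.length := by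
  suffices h : x.Subperm y from ⟨h, h.length_le⟩
  induction x generalizing s y with
  | nil => exact List.nil_subperm
  | cons a x' ih =>
    have ha : (G.degree a : ℤ) ≤ s a := by
      have := hx ⟨0, by simp⟩
      exact this
    have hay : a ∈ y := by
      by_contra hmem
      have hc : y.count a = 0 := List.count_eq_zero_of_not_mem hmem
      have := hy a
      rw [foldl_topple_eq, hc] at this
      have hnn : (0 : ℤ) ≤ (y.countP (fun u => a ∈ G.neighborFinset u) : ℤ) := by positivity
      omega
    obtain ⟨y₁, y₂, rfl⟩ := List.append_of_mem hay
    have hperm' : (y₁ ++ a :: y₂).Perm (a :: (y₁ ++ y₂)) := List.perm_middle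
    have hy2 : G.Stabilizing (G.topple s a) (y₁ ++ y₂) := by
      intro v
      have := hy v
      rwa [foldl_topple_perm G hperm' s v, List.foldl_cons] at this
    have hx' : G.Legal (G.topple s a) x' := by
      intro i
      have := hx ⟨i + 1, by simpa using i.isLt⟩
      simpa using this
    have hsub := ih (G.topple s a) (y₁ ++ y₂) hx' hy2
    exact ((List.subperm_cons a).2 hsub).trans hperm'.symm.subperm
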